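/- Let μ be an atomless Borel probability measure on X that is invariant and ergodic under the Z^2-action generated by T and S. Then μ(Z_2) = 0. -/

import Mathlib

open MeasureTheory Filter

/-- Configurations: `ℤ²`-indexed families of elements of `ℤ/2ℤ`. -/
abbrev Config := ℤ → ℤ → ZMod 2

/-- The three-dot relation. -/
def threeDot (x : Config) : Prop :=
  ∀ k l : ℤ, x k l + x (k + 1) l + x k (l + 1) = 0

/-- The three-dot system `X`. -/
def Xset : Set Config := {x | threeDot x}

/-- The `ℤ²`-shift action: `shift k l x = T^k S^l x`. -/
def shift (k l : ℤ) (x : Config) : Config := fun a b => x (a + k) (b + l)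

/-- The shift `T`. -/
def Tm : Config → Config := shift 1 0

/-- The shift `S`. -/
def Sm : Config → Config := shift 0 1

/-- `Y` : points of `X` with coordinate `1` at the origin. -/
def Yset : Set Config := {x | threeDot x ∧ x 0 0 = 1}

/-- The map `σ : Y → Y`, extended to all configurations:
it equals `Tx` if `Tx` has a `1` at the origin, and `Sx` otherwise. -/
def sig (x : Config) : Config := if x 1 0 = 1 then Tm x else Sm x

/-- `Z` : points of `Y` with σ-antecedents of every depth (equivalently,
infinitely many σ-antecedents). -/
def Zset : Set Config := {x | x ∈ Yset ∧ ∀ n : ℕ, ∃ y ∈ Yset, sig^[n] y = x}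

/-- `Z₂` : points of `Z` having two distinct σ-preimages in `Z`. -/
def Z2set : Set Config :=
  {x | x ∈ Zset ∧ ∃ y z, y ≠ z ∧ y ∈ Zset ∧ z ∈ Zset ∧ sig y = x ∧ sig z = x}

/-- The σ-component of a point `x` of `Y`: points of the `ℤ²`-orbit of `x`
lying in `Y` whose forward σ-trajectory meets that of `x`. -/
def sigComp (x : Config) : Set Config :=
  {y | (∃ k l : ℤ, y = shift k l x) ∧ y ∈ Yset ∧ ∃ p q : ℕ, sig^[p] x = sig^[q] y}

/-- Aperiodicity of a configuration for the `ℤ²`-action. -/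
def Aperiodic (x : Config) : Prop := ∀ k l : ℤ, shift k l x = x → k = 0 ∧ l = 0

/- ======================= auxiliary material ======================= -/
namespace ThreeDotAux

lemma shift_shift (k l k' l' : ℤ) (x : Config) :
    shift k l (shift k' l' x) = shift (k + k') (l + l') x := by
  funext a b
  simp [shift, add_assoc]

lemma shift_zero (x : Config) : shift 0 0 x = x := by
  funext a b; simp [shift]

lemma measurable_shift (k l : ℤ) : Measurable (shift k l) := by
  apply measurable_pi_lambda
  intro a
  apply measurable_pi_lambda
  intro b
  exact (measurable_pi_apply (b + l)).comp (measurable_pi_apply (a + k))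

/-- The shift as a measurable equivalence. -/
def shiftE (k l : ℤ) : Config ≃ᵐ Config where
  toFun := shift k l
  invFun := shift (-k) (-l)
  left_inv x := by rw [shift_shift]; norm_num [shift_zero]
  right_inv x := by rw [shift_shift]; norm_num [shift_zero]
  measurable_toFun := measurable_shift k l
  measurable_invFun := measurable_shift (-k) (-l)

lemma coe_shiftE (k l : ℤ) : ⇑(shiftE k l) = shift k l := rfl

lemma coe_shiftE_symm (k l : ℤ) : ⇑(shiftE k l).symm = shift (-k) (-l) := rfl

lemma tinv (x : Config) : shift (-1) 0 (Tm x) = x := by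
  rw [Tm, shift_shift]; norm_num [shift_zero]

lemma sinv (x : Config) : shift 0 (-1) (Sm x) = x := by
  rw [Sm, shift_shift]; norm_num [shift_zero]

lemma t_of (z : Config) : Tm (shift (-1) 0 z) = z := by
  rw [Tm, shift_shift]; norm_num [shift_zero]

lemma s_of (z : Config) : Sm (shift 0 (-1) z) = z := by
  rw [Sm, shift_shift]; norm_num [shift_zero]

lemma tm_inj {y w : Config} (h : Tm y = Tm w) : y = w := by
  rw [← tinv y, h, tinv]

lemma sm_inj {y w : Config} (h : Sm y = Sm w) : y = w := by
  rw [← sinv y, h, sinv]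

lemma measurableSet_coord (k l : ℤ) (c : ZMod 2) :
    MeasurableSet {x : Config | x k l = c} := by
  have h : Measurable fun x : Config => x k l :=
    (measurable_pi_apply l).comp (measurable_pi_apply k)
  exact h (measurableSet_singleton c)

lemma measurableSet_Yset : MeasurableSet Yset := by
  have h1 : Yset = (⋂ (k : ℤ) (l : ℤ),
      {x : Config | x k l + x (k + 1) l + x k (l + 1) = 0}) ∩ {x : Config | x 0 0 = 1} := by
    ext x
    simp only [Yset, threeDot, Set.mem_setOf_eq, Set.mem_inter_iff, Set.mem_iInter]
  rw [h1]
  refine MeasurableSet.inter ?_ (measurableSet_coord 0 0 1)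
  refine MeasurableSet.iInter fun k => MeasurableSet.iInter fun l => ?_
  have h : Measurable fun x : Config => x k l + x (k + 1) l + x k (l + 1) := by
    refine Measurable.add (M := ZMod 2) (Measurable.add (M := ZMod 2) ?_ ?_) ?_
    · exact (measurable_pi_apply l).comp (measurable_pi_apply k)
    · exact (measurable_pi_apply l).comp (measurable_pi_apply (k + 1))
    · exact (measurable_pi_apply (l + 1)).comp (measurable_pi_apply k)
  exact h (measurableSet_singleton 0)

lemma threeDot_shift {x : Config} (hx : threeDot x) (k l : ℤ) : threeDot (shift k l x) := by
  intro a b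
  have h := hx (a + k) (b + l)
  have e1 : a + 1 + k = a + k + 1 := by ring
  have e2 : b + 1 + l = b + l + 1 := by ring
  simpa [shift, e1, e2] using h

lemma zmod_key : ∀ a b : ZMod 2, 1 + a + b = 0 → a ≠ 1 → b = 1 := by decide

lemma sig_mem_Yset {x : Config} (hx : x ∈ Yset) : sig x ∈ Yset := by
  obtain ⟨h3, h00⟩ := hx
  by_cases h10 : x 1 0 = 1
  · rw [sig, if_pos h10]
    refine ⟨threeDot_shift h3 1 0, ?_⟩
    show x (0 + 1) (0 + 0) = 1
    norm_num [h10]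
  · rw [sig, if_neg h10]
    refine ⟨threeDot_shift h3 0 1, ?_⟩
    have h := h3 0 0
    norm_num at h
    rw [h00] at h
    have h01 : x 0 1 = 1 := zmod_key _ _ h h10
    show x (0 + 0) (0 + 1) = 1
    norm_num [h01]

/-- Sets of points having a σ-antecedent of depth `n` in `Y`. -/
def Iset : ℕ → Set Config
  | 0 => Yset
  | n + 1 => sig '' Iset n

lemma iset_spec : ∀ (n : ℕ) (x : Config), x ∈ Iset n ↔ ∃ y ∈ Yset, sig^[n] y = x := by
  intro n
  induction n with
  | zero => intro x; simp [Iset]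
  | succ n ih =>
    intro x
    constructor
    · rintro ⟨w, hw, rfl⟩
      obtain ⟨y, hy, hyw⟩ := (ih w).1 hw
      exact ⟨y, hy, by rw [Function.iterate_succ_apply', hyw]⟩
    · rintro ⟨y, hy, rfl⟩
      rw [Function.iterate_succ_apply']
      exact ⟨sig^[n] y, (ih _).2 ⟨y, hy, rfl⟩, rfl⟩

lemma iset_subset_Yset : ∀ n, Iset n ⊆ Yset := by
  intro n
  induction n with
  | zero => exact le_refl _
  | succ n ih => rintro _ ⟨w, hw, rfl⟩; exact sig_mem_Yset (ih hw)

lemma iset_succ_subset : ∀ n, Iset (n + 1) ⊆ Iset n := by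
  intro n
  induction n with
  | zero => rintro _ ⟨w, hw, rfl⟩; exact sig_mem_Yset hw
  | succ n ih => exact Set.image_mono ih

lemma iset_antitone {n m : ℕ} (h : n ≤ m) : Iset m ⊆ Iset n := by
  induction h with
  | refl => exact le_refl _
  | step h ih => exact (iset_succ_subset _).trans ih

lemma Zset_eq_iInter : Zset = ⋂ n, Iset n := by
  ext x
  simp only [Zset, Set.mem_setOf_eq, Set.mem_iInter, iset_spec]
  constructor
  · rintro ⟨hY, h⟩ n; exact h n
  · intro h
    refine ⟨?_, h⟩
    obtain ⟨y, hy, hyx⟩ := h 0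
    simpa using hyx ▸ hy

lemma Zset_subset_Yset : Zset ⊆ Yset := fun x hx => hx.1

lemma sig_mem_Zset {z : Config} (hz : z ∈ Zset) : sig z ∈ Zset := by
  refine ⟨sig_mem_Yset hz.1, fun n => ?_⟩
  cases n with
  | zero => exact ⟨sig z, sig_mem_Yset hz.1, rfl⟩
  | succ m =>
    obtain ⟨y, hy, hym⟩ := hz.2 m
    exact ⟨y, hy, by rw [Function.iterate_succ_apply', hym]⟩

lemma exists_preimage {z : Config} (hz : z ∈ Zset) : ∃ y ∈ Zset, sig y = z := by
  have hzI : ∀ n, z ∈ Iset n := by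
    have := Zset_eq_iInter ▸ hz
    simpa [Set.mem_iInter] using this
  have hz00 : z 0 0 = 1 := hz.1.2
  have hdisj : ∀ n, shift (-1) 0 z ∈ Iset n ∨
      ((shift 0 (-1) z) 1 0 ≠ 1 ∧ shift 0 (-1) z ∈ Iset n) := by
    intro n
    obtain ⟨w, hw, hsw⟩ : ∃ w ∈ Iset n, sig w = z := hzI (n + 1)
    by_cases h10 : w 1 0 = 1
    · left
      have hzw : z = Tm w := by rw [← hsw, sig, if_pos h10]
      rw [hzw, tinv]; exact hw
    · right
      have hzw : z = Sm w := by rw [← hsw, sig, if_neg h10]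
      have hw' : shift 0 (-1) z = w := by rw [hzw, sinv]
      rw [hw']; exact ⟨h10, hw⟩
  by_cases hall : ∀ n, shift (-1) 0 z ∈ Iset n
  · refine ⟨shift (-1) 0 z, ?_, ?_⟩
    · rw [Zset_eq_iInter]; exact Set.mem_iInter.2 hall
    · have h10 : (shift (-1) 0 z) 1 0 = 1 := by
        show z (1 + -1) (0 + 0) = 1
        norm_num [hz00]
      rw [sig, if_pos h10, t_of]
  · push_neg at hall
    obtain ⟨n0, hn0⟩ := hall
    have hS : ∀ n, shift 0 (-1) z ∈ Iset n := by
      intro n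
      rcases hdisj (max n n0) with h | h
      · exact absurd (iset_antitone (le_max_right n n0) h) hn0
      · exact iset_antitone (le_max_left n n0) h.2
    have h10 : (shift 0 (-1) z) 1 0 ≠ 1 := by
      rcases hdisj n0 with h | h
      · exact absurd h hn0
      · exact h.1
    refine ⟨shift 0 (-1) z, ?_, ?_⟩
    · rw [Zset_eq_iInter]; exact Set.mem_iInter.2 hS
    · rw [sig, if_neg h10, s_of]

lemma sig_eq_Tm {x : Config} (h : x 1 0 = 1) : sig x = Tm x := by rw [sig, if_pos h]

lemma sig_eq_Sm {x : Config} (h : ¬ x 1 0 = 1) : sig x = Sm x := by rw [sig, if_neg h]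

lemma sig_image (E : Set Config) :
    sig '' E = Tm '' (E ∩ {x : Config | x 1 0 = 1}) ∪
      Sm '' (E ∩ {x : Config | x 1 0 = 1}ᶜ) := by
  ext z
  constructor
  · rintro ⟨w, hw, rfl⟩
    by_cases h10 : w 1 0 = 1
    · exact Or.inl ⟨w, ⟨hw, h10⟩, (sig_eq_Tm h10).symm⟩
    · exact Or.inr ⟨w, ⟨hw, h10⟩, (sig_eq_Sm h10).symm⟩
  · rintro (⟨w, ⟨hw, h10⟩, rfl⟩ | ⟨w, ⟨hw, h10⟩, rfl⟩)
    · exact sig_eq_Tm (h10 : w 1 0 = 1) ▸ ⟨w, hw, rfl⟩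
    · exact sig_eq_Sm (h10 : ¬ w 1 0 = 1) ▸ ⟨w, hw, rfl⟩

lemma measurableSet_Tm_image {F : Set Config} (hF : MeasurableSet F) :
    MeasurableSet (Tm '' F) := by
  have h : Tm '' F = ⇑(shiftE 1 0).symm ⁻¹' F := by
    rw [← MeasurableEquiv.image_eq_preimage_symm, coe_shiftE]; rfl
  rw [h]
  exact (shiftE 1 0).symm.measurable hF

lemma measurableSet_Sm_image {F : Set Config} (hF : MeasurableSet F) :
    MeasurableSet (Sm '' F) := by
  have h : Sm '' F = ⇑(shiftE 0 1).symm ⁻¹' F := by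
    rw [← MeasurableEquiv.image_eq_preimage_symm, coe_shiftE]; rfl
  rw [h]
  exact (shiftE 0 1).symm.measurable hF

lemma measurableSet_Iset : ∀ n, MeasurableSet (Iset n) := by
  intro n
  induction n with
  | zero => exact measurableSet_Yset
  | succ n ih =>
    show MeasurableSet (sig '' Iset n)
    rw [sig_image]
    exact (measurableSet_Tm_image (ih.inter (measurableSet_coord 1 0 1))).union
      (measurableSet_Sm_image (ih.inter (measurableSet_coord 1 0 1).compl))

lemma measurableSet_Zset : MeasurableSet Zset := by
  rw [Zset_eq_iInter]
  exact MeasurableSet.iInter measurableSet_Iset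

end ThreeDotAux

open ThreeDotAux

/-- An atomless `ℤ²`-invariant ergodic probability measure on `X` gives
measure zero to `Z₂`. -/
theorem stmt5 (μ : Measure Config) [IsProbabilityMeasure μ]
    (hX : μ Xset = 1)
    (hT : MeasurePreserving Tm μ μ) (hS : MeasurePreserving Sm μ μ)
    (hatomless : ∀ c : Config, μ {c} = 0)
    (herg : ∀ A : Set Config, MeasurableSet A → Tm ⁻¹' A = A → Sm ⁻¹' A = A →
      μ A = 0 ∨ μ A = 1) :
    μ Z2set = 0 := by
  classical
  have hZm : MeasurableSet Zset := measurableSet_Zset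
  have hCm : MeasurableSet {x : Config | x 1 0 = 1} := measurableSet_coord 1 0 1
  set C : Set Config := {x : Config | x 1 0 = 1} with hC
  set ZT : Set Config := Zset ∩ C with hZT
  set ZS : Set Config := Zset ∩ Cᶜ with hZS
  have hZTm : MeasurableSet ZT := hZm.inter hCm
  have hZSm : MeasurableSet ZS := hZm.inter hCm.compl
  set A : Set Config := Tm '' ZT with hA
  set B : Set Config := Sm '' ZS with hB
  have hBm : MeasurableSet B := measurableSet_Sm_image hZSm
  -- A and B are subsets of Z
  have hAZ : A ⊆ Zset := by
    rintro _ ⟨y, ⟨hyZ, hyC⟩, rfl⟩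
    rw [← sig_eq_Tm (hyC : y 1 0 = 1)]
    exact sig_mem_Zset hyZ
  have hBZ : B ⊆ Zset := by
    rintro _ ⟨y, ⟨hyZ, hyC⟩, rfl⟩
    rw [← sig_eq_Sm (hyC : ¬ y 1 0 = 1)]
    exact sig_mem_Zset hyZ
  have hZAB : Zset ⊆ A ∪ B := by
    intro z hz
    obtain ⟨y, hyZ, hsy⟩ := exists_preimage hz
    by_cases h10 : y 1 0 = 1
    · exact Or.inl ⟨y, ⟨hyZ, h10⟩, by rw [← hsy, sig_eq_Tm h10]⟩
    · exact Or.inr ⟨y, ⟨hyZ, h10⟩, by rw [← hsy, sig_eq_Sm h10]⟩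
  have hUnion : A ∪ B = Zset := Set.Subset.antisymm (Set.union_subset hAZ hBZ) hZAB
  -- Z₂ is contained in A ∩ B
  have hZ2 : Z2set ⊆ A ∩ B := by
    rintro x ⟨hxZ, y, w, hyw, hyZ, hwZ, hsy, hsw⟩
    by_cases hy10 : y 1 0 = 1 <;> by_cases hw10 : w 1 0 = 1
    · exfalso
      refine hyw (tm_inj ?_)
      have h1 : Tm y = x := by rw [← hsy, sig_eq_Tm hy10]
      have h2 : Tm w = x := by rw [← hsw, sig_eq_Tm hw10]
      rw [h1, h2]
    · refine ⟨⟨y, ⟨hyZ, hy10⟩, by rw [← hsy, sig_eq_Tm hy10]⟩,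
        ⟨w, ⟨hwZ, hw10⟩, by rw [← hsw, sig_eq_Sm hw10]⟩⟩
    · refine ⟨⟨w, ⟨hwZ, hw10⟩, by rw [← hsw, sig_eq_Tm hw10]⟩,
        ⟨y, ⟨hyZ, hy10⟩, by rw [← hsy, sig_eq_Sm hy10]⟩⟩
    · exfalso
      refine hyw (sm_inj ?_)
      have h1 : Sm y = x := by rw [← hsy, sig_eq_Sm hy10]
      have h2 : Sm w = x := by rw [← hsw, sig_eq_Sm hw10]
      rw [h1, h2]
  -- measure computations
  have hTS : MeasurePreserving (⇑(shiftE 1 0)) μ μ := hT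
  have hSS : MeasurePreserving (⇑(shiftE 0 1)) μ μ := hS
  have hmuA : μ A = μ ZT := by
    have h : A = ⇑(shiftE 1 0).symm ⁻¹' ZT := by
      rw [hA, ← MeasurableEquiv.image_eq_preimage_symm, coe_shiftE]; rfl
    rw [h]
    exact (MeasurePreserving.symm _ hTS).measure_preimage hZTm.nullMeasurableSet
  have hmuB : μ B = μ ZS := by
    have h : B = ⇑(shiftE 0 1).symm ⁻¹' ZS := by
      rw [hB, ← MeasurableEquiv.image_eq_preimage_symm, coe_shiftE]; rfl
    rw [h]
    exact (MeasurePreserving.symm _ hSS).measure_preimage hZSm.nullMeasurableSet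
  have hdisjTS : Disjoint ZT ZS :=
    disjoint_compl_right.mono Set.inter_subset_right Set.inter_subset_right
  have hsum : μ A + μ B = μ Zset := by
    rw [hmuA, hmuB, ← measure_union hdisjTS hZSm]
    congr 1
    rw [hZT, hZS, ← Set.inter_union_distrib_left, Set.union_compl_self, Set.inter_univ]
  have h0 : μ (A ∩ B) = 0 := by
    have h := measure_union_add_inter (μ := μ) A hBm
    rw [hUnion, hsum] at h
    have hfin : μ Zset ≠ ⊤ := measure_ne_top μ Zset
    exact (ENNReal.add_right_inj hfin).1 (by rw [h, add_zero])
  exact le_antisymm (h0 ▸ measure_mono hZ2) zero_le
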